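/- Let X be a finite set with |X| = n and let r be an integer with 0 ≤ r and 2r ≤ n. Then there exists an injective map f from the family of r-element subsets of X to the family of (n − r)-element subsets of X such that R ⊆ f(R) for every r-element subset R; since both families have cardinality C(n, r), f is in fact a bijection between them. -/

import Mathlib

open Finset

/-- for a finite set `X` with `|X| = n` and `2r ≤ n`, there is an
injective map `f` from the `r`-element subsets of `X` to the `(n−r)`-element
subsets of `X` with `R ⊆ f(R)` for each `r`-element subset `R`; since both
families have cardinality `C(n, r)`, `f` is in fact a bijection between them. -/
theorem exists_superset_bijection {α : Type*} [DecidableEq α] (X : Finset α)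
    (n r : ℕ) (hX : X.card = n) (h2r : 2 * r ≤ n) :
    ∃ f : Finset α → Finset α,
      (∀ R ∈ X.powersetCard r, R ⊆ f R) ∧
      Set.InjOn f ↑(X.powersetCard r) ∧
      Set.BijOn f ↑(X.powersetCard r) ↑(X.powersetCard (n - r)) := by
  classical
  set t : ↥(X.powersetCard r) → Finset (Finset α) :=
    fun R => (X.powersetCard (n - r)).filter (fun Q => (R : Finset α) ⊆ Q) with ht
  set m := (n - r).choose r with hmdef
  have hm : 0 < m := Nat.choose_pos (by omega)
  -- the Hall condition, by double counting
  have hall : ∀ s : Finset ↥(X.powersetCard r), s.card ≤ (s.biUnion t).card := by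
    intro s
    have key := Finset.card_mul_le_card_mul
      (fun (a : ↥(X.powersetCard r)) (b : Finset α) => (a : Finset α) ⊆ b)
      (s := s) (t := s.biUnion t) (m := m) (n := m) ?_ ?_
    · exact Nat.le_of_mul_le_mul_right key hm
    · -- each r-set has at least m supersets of size n - r
      intro a ha
      have haX : (a : Finset α) ⊆ X ∧ (a : Finset α).card = r :=
        (Finset.mem_powersetCard).1 a.2
      have hsub : ((X \ (a : Finset α)).powersetCard (n - 2 * r)).card ≤
          ((s.biUnion t).bipartiteAbove (fun a b => (a : Finset α) ⊆ b) a).card := by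
        apply Finset.card_le_card_of_injOn (fun S => S ∪ (a : Finset α))
        · intro S hS
          obtain ⟨hS1, hS2⟩ := (Finset.mem_powersetCard).1 hS
          rw [Finset.mem_coe, Finset.mem_bipartiteAbove]
          have hdisj : Disjoint S (a : Finset α) :=
            Finset.disjoint_of_subset_left hS1 (Finset.sdiff_disjoint)
          have hmem : S ∪ (a : Finset α) ∈ t a := by
            rw [ht]
            simp only [Finset.mem_filter, Finset.mem_powersetCard]
            refine ⟨⟨?_, ?_⟩, Finset.subset_union_right⟩
            · exact Finset.union_subset (hS1.trans (Finset.sdiff_subset)) haX.1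
            · rw [Finset.card_union_of_disjoint hdisj, hS2, haX.2]; omega
          refine ⟨Finset.mem_biUnion.2 ⟨a, ha, hmem⟩, Finset.subset_union_right⟩
        · intro S hS S' hS' hSS
          obtain ⟨hS1, _⟩ := (Finset.mem_powersetCard).1 hS
          obtain ⟨hS'1, _⟩ := (Finset.mem_powersetCard).1 hS'
          have h1 : Disjoint S (a : Finset α) :=
            Finset.disjoint_of_subset_left hS1 (Finset.sdiff_disjoint)
          have h2 : Disjoint S' (a : Finset α) :=
            Finset.disjoint_of_subset_left hS'1 (Finset.sdiff_disjoint)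
          have hu : S ∪ (a : Finset α) = S' ∪ (a : Finset α) := hSS
          have : (S ∪ (a : Finset α)) \ (a : Finset α) =
              (S' ∪ (a : Finset α)) \ (a : Finset α) := by rw [hu]
          rwa [Finset.union_sdiff_right, Finset.union_sdiff_right,
            Finset.sdiff_eq_self_of_disjoint h1, Finset.sdiff_eq_self_of_disjoint h2] at this
      calc m = (n - r).choose (n - 2 * r) := by
                rw [hmdef, ← Nat.choose_symm (by omega : n - 2 * r ≤ n - r)]
                congr 1
                omega
        _ = ((X \ (a : Finset α)).powersetCard (n - 2 * r)).card := by
                rw [Finset.card_powersetCard, Finset.card_sdiff_of_subset haX.1, hX, haX.2]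
        _ ≤ _ := hsub
    · -- each (n - r)-set has at most m subsets of size r
      intro b hb
      obtain ⟨a0, ha0, hb'⟩ := Finset.mem_biUnion.1 hb
      have hbX : b ⊆ X ∧ b.card = n - r := by
        rw [ht] at hb'
        exact (Finset.mem_powersetCard).1 (Finset.mem_filter.1 hb').1
      have : (s.bipartiteBelow
          (fun (a : {x // x ∈ X.powersetCard r}) b => (a : Finset α) ⊆ b) b).card ≤
          (b.powersetCard r).card := by
        apply Finset.card_le_card_of_injOn
          (fun (a : {x // x ∈ X.powersetCard r}) => (a : Finset α))
        · intro a ha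
          rw [Finset.mem_coe, Finset.mem_bipartiteBelow] at ha
          exact (Finset.mem_powersetCard).2 ⟨ha.2, ((Finset.mem_powersetCard).1 a.2).2⟩
        · intro a _ a' _ h
          exact Subtype.ext h
      rw [Finset.card_powersetCard, hbX.2] at this
      exact this
  obtain ⟨f, hfinj, hft⟩ := (Finset.all_card_le_biUnion_card_iff_exists_injective t).1 hall
  -- extend f to all of Finset α
  refine ⟨fun R => if h : R ∈ X.powersetCard r then f ⟨R, h⟩ else ∅, ?_, ?_, ?_⟩
  · intro R hR
    simp only [dif_pos hR]
    have := hft ⟨R, hR⟩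
    rw [ht] at this
    exact (Finset.mem_filter.1 this).2
  · intro R hR R' hR' hRR'
    simp only [Finset.mem_coe] at hR hR'
    simp only [dif_pos hR, dif_pos hR'] at hRR'
    exact Subtype.mk_eq_mk.1 (hfinj hRR')
  · have hmaps : ∀ R ∈ X.powersetCard r,
        (if h : R ∈ X.powersetCard r then f ⟨R, h⟩ else ∅) ∈ X.powersetCard (n - r) := by
      intro R hR
      simp only [dif_pos hR]
      have := hft ⟨R, hR⟩
      rw [ht] at this
      exact (Finset.mem_filter.1 this).1
    have hinj : Set.InjOn (fun R => if h : R ∈ X.powersetCard r then f ⟨R, h⟩ else ∅)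
        ↑(X.powersetCard r) := by
      intro R hR R' hR' hRR'
      simp only [Finset.mem_coe] at hR hR'
      simp only [dif_pos hR, dif_pos hR'] at hRR'
      exact Subtype.mk_eq_mk.1 (hfinj hRR')
    have himg : (X.powersetCard r).image
        (fun R => if h : R ∈ X.powersetCard r then f ⟨R, h⟩ else ∅) =
        X.powersetCard (n - r) := by
      apply Finset.eq_of_subset_of_card_le
      · intro Q hQ
        obtain ⟨R, hR, rfl⟩ := Finset.mem_image.1 hQ
        exact hmaps R hR
      · rw [Finset.card_image_of_injOn hinj, Finset.card_powersetCard,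
          Finset.card_powersetCard, hX, Nat.choose_symm (by omega : r ≤ n)]
    refine ⟨fun R hR => hmaps R hR, hinj, ?_⟩
    intro Q hQ
    simp only [Finset.mem_coe] at hQ
    rw [← himg] at hQ
    obtain ⟨R, hR, hfR⟩ := Finset.mem_image.1 hQ
    exact ⟨R, hR, hfR⟩
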